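/- Let m, n be positive integers and P₂(ζ) = Σ_{j=1}^n ζⱼ², viewed as a polynomial on ℂⁿ. There exists C > 0 such that for all τ ∈ ℝ, η̃ ∈ ℝ and ξ ∈ ℝⁿ: |−i|η̃|^{2m−1}η̃ + P₂^m(ξ − iτeₙ)|² + τ² |(∂ₙ P₂^m)(ξ − iτeₙ)|² + τ^{2m} |(∂ₙ^m P₂^m)(ξ − iτeₙ)|² ≥ C ( |η̃|^{4m} + |ξ − iτeₙ|^{4m} ). -/

import Mathlib

noncomputable section

/-- The polynomial `P₂(ζ) = Σⱼ ζⱼ²`. -/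
def P₂ (n : ℕ) : MvPolynomial (Fin n) ℂ := ∑ j, MvPolynomial.X j ^ 2

/-- The last coordinate index of `Fin n`. -/
def lastI (n : ℕ) (hn : 0 < n) : Fin n := ⟨n - 1, Nat.sub_lt hn one_pos⟩

/-- The complex point `ξ − iτeₙ ∈ ℂⁿ`. -/
def evalPt {n : ℕ} (hn : 0 < n) (ξ : Fin n → ℝ) (τ : ℝ) : Fin n → ℂ :=
  fun j => (ξ j : ℂ) - if j = lastI n hn then Complex.I * (τ : ℂ) else 0

end

namespace SymbolAux

open MvPolynomial

/-! ### Algebraic lemmas about `P₂` and its derivatives -/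

lemma eval_P₂ {n : ℕ} (z : Fin n → ℂ) : MvPolynomial.eval z (P₂ n) = ∑ j, (z j)^2 := by
  simp [P₂]

lemma pderiv_P₂ {n : ℕ} (i : Fin n) : pderiv i (P₂ n) = 2 * X i := by
  classical
  rw [P₂, map_sum, Finset.sum_eq_single i]
  · rw [pderiv_pow, pderiv_X_self]; ring
  · intro j _ hj
    rw [pderiv_pow, pderiv_X_of_ne hj]; ring
  · simp

lemma pderiv_P₂_pow {n : ℕ} (i : Fin n) (m : ℕ) :
    pderiv i ((P₂ n)^m) = (m : MvPolynomial (Fin n) ℂ) * (2 * X i) * (P₂ n)^(m-1) := by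
  rw [pderiv_pow, pderiv_P₂]; ring

lemma iter_pderiv {n : ℕ} (i : Fin n) : ∀ (k a : ℕ), ∃ (c : ℕ) (Q : MvPolynomial (Fin n) ℂ),
    0 < c ∧ (fun q => pderiv i q)^[k] ((P₂ n)^(k+a)) =
      C (c : ℂ) * (X i ^ k * (P₂ n)^a) + (P₂ n)^(a+1) * Q := by
  intro k
  induction k with
  | zero => intro a; exact ⟨1, 0, one_pos, by simp⟩
  | succ k ih =>
    intro a
    obtain ⟨c, Q, hc, hQ⟩ := ih (a+1)
    refine ⟨2*(a+1)*c, C (c:ℂ) * pderiv i (X i ^ k) + C ((2*(a+2) : ℕ) : ℂ) * (X i * Q)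
      + P₂ n * pderiv i Q, by positivity, ?_⟩
    have h1 : k + 1 + a = k + (a+1) := by ring
    rw [h1, Function.iterate_succ_apply', hQ]
    simp only [map_add, pderiv_C_mul, pderiv_mul, pderiv_pow, pderiv_P₂, Nat.add_sub_cancel,
      Derivation.map_natCast, map_mul, map_natCast, map_ofNat]
    push_cast
    ring

/-! ### Homogeneity -/

lemma isHomogeneous_P₂ (n : ℕ) : (P₂ n).IsHomogeneous 2 := by
  apply IsHomogeneous.sum
  intro j _
  simpa using (isHomogeneous_X ℂ j).pow 2

lemma degree_sub_single {n : ℕ} (v : Fin n →₀ ℕ) (i : Fin n) (hvi : v i ≠ 0) :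
    (v - Finsupp.single i 1).degree + 1 = v.degree := by
  have hle : Finsupp.single i 1 ≤ v := by
    rw [Finsupp.single_le_iff]; omega
  have h := tsub_add_cancel_of_le hle
  calc (v - Finsupp.single i 1).degree + 1
      = (v - Finsupp.single i 1).degree + (Finsupp.single i 1).degree := by
        congr 1
        simp [Finsupp.degree_single]
    _ = v.degree := by
        simp only [Finsupp.degree_eq_weight_one] at *
        rw [← map_add, h]

lemma isHomogeneous_pderiv {n d : ℕ} {p : MvPolynomial (Fin n) ℂ} (i : Fin n)
    (h : p.IsHomogeneous d) : (pderiv i p).IsHomogeneous (d - 1) := by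
  classical
  nth_rewrite 1 [p.as_sum]
  rw [map_sum]
  apply IsHomogeneous.sum
  intro v hv
  rw [pderiv_monomial]
  by_cases hvi : v i = 0
  · rw [hvi]
    simpa using isHomogeneous_zero (Fin n) ℂ (d-1)
  · apply isHomogeneous_monomial
    have hd : v.degree = d := by
      have := h (mem_support_iff.mp hv)
      rw [Finsupp.degree_eq_weight_one]
      exact this
    have := degree_sub_single v i hvi
    omega

lemma eval_mul_of_isHomogeneous {n d : ℕ} {p : MvPolynomial (Fin n) ℂ}
    (h : p.IsHomogeneous d) (c : ℂ) (z : Fin n → ℂ) :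
    eval (fun j => c * z j) p = c ^ d * eval z p := by
  rw [eval_eq, eval_eq, Finset.mul_sum]
  apply Finset.sum_congr rfl
  intro v hv
  have hd : ∑ i ∈ v.support, v i = d := by
    have := h (mem_support_iff.mp hv)
    rw [← this, Finsupp.weight_apply]
    simp [Finsupp.sum]
  calc coeff v p * ∏ i ∈ v.support, (c * z i) ^ v i
      = coeff v p * ((∏ i ∈ v.support, c ^ v i) * ∏ i ∈ v.support, (z i) ^ v i) := by
        rw [← Finset.prod_mul_distrib]
        simp [mul_pow]
    _ = c ^ d * (coeff v p * ∏ i ∈ v.support, (z i) ^ v i) := by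
        rw [Finset.prod_pow_eq_pow_sum, hd]; ring

lemma isHomogeneous_iter_pderiv {n : ℕ} (i : Fin n) (m : ℕ) :
    ∀ k, (((fun q => pderiv i q)^[k] ((P₂ n)^m)).IsHomogeneous (2*m - k)) := by
  intro k
  induction k with
  | zero => simpa using (isHomogeneous_P₂ n).pow m
  | succ k ih =>
    rw [Function.iterate_succ_apply']
    have := isHomogeneous_pderiv i ih
    rwa [Nat.sub_sub] at this

/-! ### Evaluation at `ξ - iτ eₙ` -/

lemma evalPt_apply {n : ℕ} (hn : 0 < n) (ξ : Fin n → ℝ) (τ : ℝ) (j : Fin n) :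
    evalPt hn ξ τ j = (ξ j : ℂ) - if j = lastI n hn then Complex.I * (τ : ℂ) else 0 := rfl

lemma evalPt_scale {n : ℕ} (hn : 0 < n) (ξ : Fin n → ℝ) (τ lam : ℝ) :
    evalPt hn (fun j => lam * ξ j) (lam * τ) = fun j => (lam : ℂ) * evalPt hn ξ τ j := by
  funext j
  simp only [evalPt]
  split <;> push_cast <;> ring

lemma eval_P₂_evalPt {n : ℕ} (hn : 0 < n) (ξ : Fin n → ℝ) (τ : ℝ) :
    MvPolynomial.eval (evalPt hn ξ τ) (P₂ n) =
      (((∑ j, ξ j ^ 2 : ℝ) : ℂ) - (τ:ℂ)^2) - 2 * Complex.I * (ξ (lastI n hn) : ℂ) * τ := by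
  classical
  rw [eval_P₂]
  have key : ∀ j : Fin n, (evalPt hn ξ τ j)^2 =
      (ξ j : ℂ)^2 + (if j = lastI n hn then
        (-(τ:ℂ)^2 - 2 * Complex.I * (ξ j : ℂ) * τ) else 0) := by
    intro j
    rw [evalPt_apply]
    split
    · have h2 : Complex.I ^ 2 = -1 := Complex.I_sq
      ring_nf
      rw [h2]
      ring
    · ring
  rw [Finset.sum_congr rfl (fun j _ => key j), Finset.sum_add_distrib,
    Finset.sum_ite_eq' Finset.univ (lastI n hn)]
  simp only [Finset.mem_univ, if_true]
  push_cast
  ring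

/-! ### The two sides of the inequality as functions -/

/-- The left-hand side. -/
noncomputable def Fsym (m n : ℕ) (hn : 0 < n) : ℝ × ℝ × (Fin n → ℝ) → ℝ := fun p =>
  ‖-Complex.I * ((|p.2.1| ^ (2 * m - 1) * p.2.1 : ℝ) : ℂ) +
      MvPolynomial.eval (evalPt hn p.2.2 p.1) (P₂ n ^ m)‖ ^ 2 +
    p.1 ^ 2 * ‖MvPolynomial.eval (evalPt hn p.2.2 p.1)
      (MvPolynomial.pderiv (lastI n hn) (P₂ n ^ m))‖ ^ 2 +
    p.1 ^ (2 * m) * ‖MvPolynomial.eval (evalPt hn p.2.2 p.1)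
      ((fun Q => MvPolynomial.pderiv (lastI n hn) Q)^[m] (P₂ n ^ m))‖ ^ 2

/-- The right-hand side (without the constant). -/
def Gsym (m n : ℕ) : ℝ × ℝ × (Fin n → ℝ) → ℝ := fun p =>
  |p.2.1| ^ (4 * m) + ((∑ j, p.2.2 j ^ 2) + p.1 ^ 2) ^ (2 * m)

lemma Fsym_nonneg (m n : ℕ) (hn : 0 < n) (p : ℝ × ℝ × (Fin n → ℝ)) : 0 ≤ Fsym m n hn p := by
  have h1 : (0:ℝ) ≤ p.1 ^ 2 := sq_nonneg _
  have h2 : (0:ℝ) ≤ p.1 ^ (2*m) := by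
    rw [pow_mul]; positivity
  unfold Fsym
  positivity

lemma Gsym_nonneg (m n : ℕ) (p : ℝ × ℝ × (Fin n → ℝ)) : 0 ≤ Gsym m n p := by
  have h1 : (0:ℝ) ≤ (∑ j, p.2.2 j ^ 2) + p.1 ^ 2 := by positivity
  unfold Gsym
  positivity

lemma continuous_Fsym (m n : ℕ) (hn : 0 < n) : Continuous (Fsym m n hn) := by
  have hev : Continuous (fun p : ℝ × ℝ × (Fin n → ℝ) => evalPt hn p.2.2 p.1) := by
    apply continuous_pi
    intro j
    simp only [evalPt]
    by_cases hj : j = lastI n hn <;> simp only [hj, if_true, if_false] <;> fun_prop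
  have heval : ∀ q : MvPolynomial (Fin n) ℂ,
      Continuous (fun p : ℝ × ℝ × (Fin n → ℝ) => MvPolynomial.eval (evalPt hn p.2.2 p.1) q) :=
    fun q => (MvPolynomial.continuous_eval (p := q)).comp hev
  unfold Fsym
  have h1 := heval (P₂ n ^ m)
  have h2 := heval (MvPolynomial.pderiv (lastI n hn) (P₂ n ^ m))
  have h3 := heval ((fun Q => MvPolynomial.pderiv (lastI n hn) Q)^[m] (P₂ n ^ m))
  fun_prop

lemma continuous_Gsym (m n : ℕ) : Continuous (Gsym m n) := by
  unfold Gsym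
  fun_prop

/-! ### Scaling -/


lemma norm_sq_smul (lam : ℝ) (hlam : 0 < lam) (k : ℕ) (w : ℂ) :
    ‖(lam:ℂ)^k * w‖^2 = lam^(2*k) * ‖w‖^2 := by
  rw [norm_mul, norm_pow, Complex.norm_real, Real.norm_eq_abs, abs_of_pos hlam, mul_pow,
    ← pow_mul]
  ring

lemma Fsym_scale (m n : ℕ) (hm : 0 < m) (hn : 0 < n) (τ η lam : ℝ) (ξ : Fin n → ℝ)
    (hlam : 0 < lam) :
    Fsym m n hn (lam * τ, lam * η, fun j => lam * ξ j) =
      lam ^ (4*m) * Fsym m n hn (τ, η, ξ) := by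
  obtain ⟨m', rfl⟩ : ∃ m', m = m' + 1 := ⟨m - 1, by omega⟩
  have hsub : 2 * (m' + 1) - 1 = 2 * m' + 1 := by omega
  have hp1 : ((P₂ n)^(m'+1)).IsHomogeneous (2*(m'+1)) := (isHomogeneous_P₂ n).pow (m'+1)
  have hp2 : (pderiv (lastI n hn) ((P₂ n)^(m'+1))).IsHomogeneous (2*m'+1) := by
    have := isHomogeneous_pderiv (lastI n hn) hp1
    rwa [hsub] at this
  have hp3 : (((fun q => pderiv (lastI n hn) q)^[m'+1] ((P₂ n)^(m'+1)))).IsHomogeneous (m'+1) := by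
    have := isHomogeneous_iter_pderiv (lastI n hn) (m'+1) (m'+1)
    rwa [show 2*(m'+1) - (m'+1) = m'+1 by omega] at this
  unfold Fsym
  simp only [hsub]
  rw [evalPt_scale, eval_mul_of_isHomogeneous hp1, eval_mul_of_isHomogeneous hp2,
    eval_mul_of_isHomogeneous hp3]
  set E1 := MvPolynomial.eval (evalPt hn ξ τ) ((P₂ n)^(m'+1)) with hE1
  set E2 := MvPolynomial.eval (evalPt hn ξ τ) (pderiv (lastI n hn) ((P₂ n)^(m'+1))) with hE2
  set E3 := MvPolynomial.eval (evalPt hn ξ τ)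
    ((fun q => pderiv (lastI n hn) q)^[m'+1] ((P₂ n)^(m'+1))) with hE3
  have h1 : -Complex.I * ((|lam * η| ^ (2 * m' + 1) * (lam * η) : ℝ) : ℂ) +
      (lam:ℂ)^(2*(m'+1)) * E1 =
      (lam:ℂ)^(2*(m'+1)) * (-Complex.I * ((|η| ^ (2 * m' + 1) * η : ℝ) : ℂ) + E1) := by
    rw [abs_mul, abs_of_pos hlam]
    push_cast
    ring
  rw [h1, norm_sq_smul lam hlam, norm_sq_smul lam hlam, norm_sq_smul lam hlam]
  rw [mul_pow lam τ 2, mul_pow lam τ (2*(m'+1))]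
  ring

lemma Gsym_scale (m n : ℕ) (hm : 0 < m) (τ η lam : ℝ) (ξ : Fin n → ℝ) (hlam : 0 < lam) :
    Gsym m n (lam * τ, lam * η, fun j => lam * ξ j) = lam ^ (4*m) * Gsym m n (τ, η, ξ) := by
  unfold Gsym
  have h1 : |lam * η| = lam * |η| := by rw [abs_mul, abs_of_pos hlam]
  have h2 : (∑ j, (lam * ξ j)^2) = lam^2 * ∑ j, ξ j^2 := by
    rw [Finset.mul_sum]
    exact Finset.sum_congr rfl fun j _ => by ring
  simp only [h1, h2]
  have h3 : lam ^ 2 * (∑ j, ξ j ^ 2) + (lam * τ)^2 = lam^2 * ((∑ j, ξ j ^2) + τ^2) := by ring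
  rw [h3, mul_pow lam |η| (4*m), mul_pow (lam^2) _ (2*m), ← pow_mul]
  ring


/-! ### Positivity on the unit sphere -/


lemma Fsym_pos (m n : ℕ) (hm : 0 < m) (hn : 0 < n) (p : ℝ × ℝ × (Fin n → ℝ))
    (hG : Gsym m n p = 1) : 0 < Fsym m n hn p := by
  obtain ⟨τ, η, ξ⟩ := p
  rcases (Fsym_nonneg m n hn (τ, η, ξ)).lt_or_eq with h | h
  · exact h
  exfalso
  have hF := h.symm
  simp only [Fsym] at hF
  simp only [Gsym] at hG
  set i := lastI n hn with hi
  set z := evalPt hn ξ τ with hzdef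
  set a : ℝ := |η| ^ (2 * m - 1) * η with ha
  set e : ℂ := MvPolynomial.eval z (P₂ n) with he
  set S : ℝ := ∑ j, ξ j ^ 2 with hS
  set x : ℝ := ξ i with hx
  -- the three terms vanish
  have hnn2 : (0:ℝ) ≤ τ ^ 2 * ‖MvPolynomial.eval z (pderiv i ((P₂ n)^m))‖ ^ 2 := by positivity
  have hτ2m : (0:ℝ) ≤ τ ^ (2*m) := by rw [pow_mul]; positivity
  have hnn3 : (0:ℝ) ≤ τ ^ (2*m) *
      ‖MvPolynomial.eval z ((fun Q => pderiv i Q)^[m] ((P₂ n)^m))‖ ^ 2 := by positivity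
  have hnn1 : (0:ℝ) ≤ ‖-Complex.I * (a:ℂ) + MvPolynomial.eval z ((P₂ n)^m)‖ ^ 2 := by positivity
  have hT1 : ‖-Complex.I * (a:ℂ) + MvPolynomial.eval z ((P₂ n)^m)‖ ^ 2 = 0 := by linarith
  have hT2 : τ ^ 2 * ‖MvPolynomial.eval z (pderiv i ((P₂ n)^m))‖ ^ 2 = 0 := by linarith
  have hT3 : τ ^ (2*m) *
      ‖MvPolynomial.eval z ((fun Q => pderiv i Q)^[m] ((P₂ n)^m))‖ ^ 2 = 0 := by linarith
  -- term 1 gives e^m = I * a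
  have hev1 : MvPolynomial.eval z ((P₂ n)^m) = e ^ m := by rw [map_pow]
  have hzero1 : -Complex.I * (a:ℂ) + e ^ m = 0 := by
    rw [← hev1]
    have := pow_eq_zero_iff (two_ne_zero (α := ℕ)) |>.mp hT1
    exact norm_eq_zero.mp this
  have hem : e ^ m = Complex.I * (a:ℂ) := by linear_combination hzero1
  -- the value of e
  have heval : e = ((S - τ^2 : ℝ):ℂ) + Complex.I * ((-(2*x*τ) : ℝ):ℂ) := by
    rw [he, hzdef, eval_P₂_evalPt hn ξ τ, hS, hx, hi]
    push_cast
    ring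
  rcases eq_or_ne τ 0 with hτ | hτ
  · -- τ = 0 : e = S real, so a = 0, S = 0, contradiction with hG
    have he0 : e = ((S:ℝ):ℂ) := by rw [heval, hτ]; push_cast; ring
    have hem0 : (((S^m : ℝ)):ℂ) = Complex.I * (a:ℂ) := by
      rw [Complex.ofReal_pow, ← he0]
      exact hem
    have haz : a = 0 := by
      have h := congrArg Complex.im hem0
      simp only [Complex.ofReal_im, Complex.mul_im, Complex.I_re, Complex.I_im,
        Complex.ofReal_re, zero_mul, one_mul, zero_add, add_zero, mul_zero] at h
      linarith
    have hSz : S ^ m = 0 := by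
      have h := congrArg Complex.re hem0
      simp only [Complex.ofReal_re, Complex.mul_re, Complex.I_re, Complex.I_im,
        Complex.ofReal_im, zero_mul, one_mul, mul_zero, zero_sub, neg_zero] at h
      linarith
    have hS0 : S = 0 := by
      by_contra hne
      exact (pow_ne_zero m hne) hSz
    have hη : η = 0 := by
      by_contra hη
      exact (mul_ne_zero (pow_ne_zero _ (abs_ne_zero.mpr hη)) hη) haz
    rw [hη, hS0, hτ] at hG
    norm_num [zero_pow (by omega : 4*m ≠ 0), zero_pow (by omega : 2*m ≠ 0)] at hG
  · -- τ ≠ 0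
    have hzi : z i = (x:ℂ) - Complex.I * (τ:ℂ) := by
      rw [hzdef, hx]
      simp [evalPt_apply, hi]
    have hzine : z i ≠ 0 := by
      intro h0
      apply hτ
      have := congrArg Complex.im (hzi.symm.trans h0)
      simpa using this
    -- term 2 gives e^(m-1) = 0
    have hev2 : MvPolynomial.eval z (pderiv i ((P₂ n)^m)) = 0 := by
      rcases mul_eq_zero.mp hT2 with h' | h'
      · exact absurd h' (pow_ne_zero _ hτ)
      · exact norm_eq_zero.mp (pow_eq_zero_iff (two_ne_zero (α := ℕ)) |>.mp h')
    rw [pderiv_P₂_pow] at hev2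
    simp only [map_mul, map_pow, map_natCast, eval_X, map_ofNat] at hev2
    have hem1 : e ^ (m-1) = 0 := by
      have h2 : ((2:ℂ) * z i) ≠ 0 := mul_ne_zero two_ne_zero hzine
      have hmc : ((m:ℂ)) ≠ 0 := Nat.cast_ne_zero.mpr hm.ne'
      have := hev2
      rw [← he] at this
      rcases mul_eq_zero.mp this with h' | h'
      · rcases mul_eq_zero.mp h' with h'' | h''
        · exact absurd h'' hmc
        · exact absurd h'' (mul_ne_zero two_ne_zero hzine)
      · exact h'
    rcases eq_or_lt_of_le (Nat.succ_le_of_lt hm) with hm1 | hm2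
    · -- m = 1
      have hm0 : m - 1 = 0 := by omega
      rw [hm0, pow_zero] at hem1
      exact one_ne_zero hem1
    · -- m ≥ 2
      have he0 : e = 0 := pow_eq_zero_iff (by omega : m - 1 ≠ 0) |>.mp hem1
      -- real/imaginary parts of e = 0
      have him : -(2 * x * τ) = 0 := by
        have h := congrArg Complex.im (heval.symm.trans he0)
        simp only [Complex.add_im, Complex.ofReal_im, Complex.mul_im, Complex.I_re,
          Complex.I_im, Complex.ofReal_re, Complex.zero_im, zero_mul, one_mul, zero_add,
          add_zero, mul_zero] at h
        linarith
      have hx0 : x = 0 := by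
        rcases mul_eq_zero.mp (by linarith : 2 * x * τ = 0) with h' | h'
        · rcases mul_eq_zero.mp h' with h'' | h''
          · norm_num at h''
          · exact h''
        · exact absurd h' hτ
      -- term 3
      have hev3 : MvPolynomial.eval z ((fun Q => pderiv i Q)^[m] ((P₂ n)^m)) = 0 := by
        rcases mul_eq_zero.mp hT3 with h' | h'
        · exact absurd h' (pow_ne_zero _ hτ)
        · exact norm_eq_zero.mp (pow_eq_zero_iff (two_ne_zero (α := ℕ)) |>.mp h')
      obtain ⟨c, Q, hc, hQ⟩ := iter_pderiv i m 0
      rw [Nat.add_zero] at hQ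
      rw [hQ] at hev3
      simp only [map_add, map_mul, map_pow, eval_C, eval_X, pow_zero, mul_one, zero_add,
        pow_one] at hev3
      rw [← he, he0] at hev3
      simp only [zero_mul, add_zero] at hev3
      rcases mul_eq_zero.mp hev3 with h' | h'
      · exact (Nat.cast_ne_zero.mpr hc.ne' : (c:ℂ) ≠ 0) h'
      · exact pow_ne_zero _ hzine h'


end SymbolAux

/-- The homogeneous symbol estimate (3.9), after the substitution
`η = |η̃|^{2m−1}η̃`. -/
theorem symbol_lower_bound_homogeneous
    (m n : ℕ) (hm : 0 < m) (hn : 0 < n) :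
    ∃ C > (0 : ℝ), ∀ (τ η : ℝ) (ξ : Fin n → ℝ),
      ‖-Complex.I * ((|η| ^ (2 * m - 1) * η : ℝ) : ℂ) +
          MvPolynomial.eval (evalPt hn ξ τ) (P₂ n ^ m)‖ ^ 2 +
        τ ^ 2 * ‖MvPolynomial.eval (evalPt hn ξ τ)
          (MvPolynomial.pderiv (lastI n hn) (P₂ n ^ m))‖ ^ 2 +
        τ ^ (2 * m) * ‖MvPolynomial.eval (evalPt hn ξ τ)
          ((fun Q => MvPolynomial.pderiv (lastI n hn) Q)^[m] (P₂ n ^ m))‖ ^ 2 ≥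
      C * (|η| ^ (4 * m) + ((∑ j, ξ j ^ 2) + τ ^ 2) ^ (2 * m)) := by
  classical
  open SymbolAux in
  -- the compact "sphere" {G = 1}
  set K : Set (ℝ × ℝ × (Fin n → ℝ)) := {p | SymbolAux.Gsym m n p = 1} with hK
  have hKclosed : IsClosed K := isClosed_eq (SymbolAux.continuous_Gsym m n) continuous_const
  have hbox : IsCompact ((Set.Icc (-1:ℝ) 1) ×ˢ ((Set.Icc (-1:ℝ) 1) ×ˢ
      (Set.pi Set.univ fun _ : Fin n => Set.Icc (-1:ℝ) 1))) :=
    (isCompact_Icc).prod ((isCompact_Icc).prod (isCompact_univ_pi fun _ => isCompact_Icc))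
  have hsub : K ⊆ (Set.Icc (-1:ℝ) 1) ×ˢ ((Set.Icc (-1:ℝ) 1) ×ˢ
      (Set.pi Set.univ fun _ : Fin n => Set.Icc (-1:ℝ) 1)) := by
    rintro ⟨τ, η, ξ⟩ hp
    simp only [hK, Set.mem_setOf_eq, SymbolAux.Gsym] at hp
    have hSnn : (0:ℝ) ≤ ∑ j, ξ j ^ 2 := Finset.sum_nonneg fun j _ => sq_nonneg _
    have hbase : (0:ℝ) ≤ (∑ j, ξ j ^ 2) + τ ^ 2 := by positivity
    have h1 : |η| ≤ 1 := by
      by_contra hc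
      push_neg at hc
      have := one_lt_pow₀ hc (by omega : 4*m ≠ 0)
      have h0 : (0:ℝ) ≤ ((∑ j, ξ j ^ 2) + τ ^ 2) ^ (2*m) := pow_nonneg hbase _
      linarith
    have h2 : (∑ j, ξ j ^ 2) + τ ^ 2 ≤ 1 := by
      by_contra hc
      push_neg at hc
      have := one_lt_pow₀ hc (by omega : 2*m ≠ 0)
      have h0 : (0:ℝ) ≤ |η| ^ (4*m) := pow_nonneg (abs_nonneg η) _
      linarith
    refine ⟨?_, ?_, ?_⟩
    · have hτ2 : τ^2 ≤ 1 := by linarith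
      constructor <;> nlinarith
    · exact abs_le.mp h1
    · intro j _
      have hj : ξ j ^ 2 ≤ ∑ k, ξ k ^ 2 :=
        Finset.single_le_sum (f := fun k => ξ k ^ 2) (fun k _ => sq_nonneg _)
          (Finset.mem_univ j)
      have : ξ j ^ 2 ≤ 1 := by nlinarith [sq_nonneg τ]
      constructor <;> nlinarith
  have hKc : IsCompact K := hbox.of_isClosed_subset hKclosed hsub
  have hKne : K.Nonempty := by
    refine ⟨(0, 1, 0), ?_⟩
    simp only [hK, Set.mem_setOf_eq, SymbolAux.Gsym]
    norm_num [zero_pow (by omega : 2*m ≠ 0)]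
  obtain ⟨q, hqK, hq⟩ := hKc.exists_isMinOn hKne (SymbolAux.continuous_Fsym m n hn).continuousOn
  have hCpos : 0 < SymbolAux.Fsym m n hn q := SymbolAux.Fsym_pos m n hm hn q hqK
  refine ⟨SymbolAux.Fsym m n hn q, hCpos, ?_⟩
  intro τ η ξ
  show SymbolAux.Fsym m n hn (τ, η, ξ) ≥
    SymbolAux.Fsym m n hn q * SymbolAux.Gsym m n (τ, η, ξ)
  rcases (SymbolAux.Gsym_nonneg m n (τ, η, ξ)).eq_or_lt with hG0 | hG0
  · rw [← hG0, mul_zero]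
    exact SymbolAux.Fsym_nonneg m n hn (τ, η, ξ)
  · set G₀ := SymbolAux.Gsym m n (τ, η, ξ) with hG₀
    set lam : ℝ := G₀ ^ (((4*m : ℕ) : ℝ))⁻¹ with hlamdef
    have hlam : 0 < lam := Real.rpow_pos_of_pos hG0 _
    have hlam4 : lam ^ (4*m) = G₀ := by
      rw [hlamdef, ← Real.rpow_natCast (G₀ ^ (((4*m : ℕ) : ℝ))⁻¹) (4*m),
        ← Real.rpow_mul hG0.le]
      rw [inv_mul_cancel₀ (by positivity : ((4*m : ℕ) : ℝ) ≠ 0), Real.rpow_one]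
    have hpt : (τ, η, ξ) = (lam * (τ/lam), lam * (η/lam), fun j => lam * (ξ j / lam)) := by
      refine Prod.ext ?_ (Prod.ext ?_ ?_) <;> simp only
      · rw [mul_div_cancel₀ _ hlam.ne']
      · rw [mul_div_cancel₀ _ hlam.ne']
      · funext j; rw [mul_div_cancel₀ _ hlam.ne']
    have hGsc := SymbolAux.Gsym_scale m n hm (τ/lam) (η/lam) lam (fun j => ξ j / lam) hlam
    rw [← hpt] at hGsc
    have hG1 : SymbolAux.Gsym m n (τ/lam, η/lam, fun j => ξ j / lam) = 1 := by
      rw [hlam4] at hGsc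
      have h : G₀ * 1 = G₀ * SymbolAux.Gsym m n (τ/lam, η/lam, fun j => ξ j / lam) := by
        rw [mul_one]; exact hGsc
      exact (mul_left_cancel₀ hG0.ne' h).symm
    have hmem : (τ/lam, η/lam, fun j => ξ j / lam) ∈ K := by
      simpa [hK, Set.mem_setOf_eq] using hG1
    have hmin : SymbolAux.Fsym m n hn q ≤
        SymbolAux.Fsym m n hn (τ/lam, η/lam, fun j => ξ j / lam) := hq hmem
    have hFsc := SymbolAux.Fsym_scale m n hm hn (τ/lam) (η/lam) lam (fun j => ξ j / lam) hlam
    rw [← hpt] at hFsc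
    rw [hFsc, hlam4] at *
    calc SymbolAux.Fsym m n hn q * G₀
        ≤ SymbolAux.Fsym m n hn (τ/lam, η/lam, fun j => ξ j / lam) * G₀ := by
          apply mul_le_mul_of_nonneg_right hmin hG0.le
      _ = G₀ * SymbolAux.Fsym m n hn (τ/lam, η/lam, fun j => ξ j / lam) := by ring
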